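/- For every integer e and all natural numbers M, s with 0 ≤ M < 10^s, there exist an integer e′ and natural numbers M′, s′ with 0 ≤ M′ < 10^{s′} such that 10^e · (M / 10^s) = 2^{e′} · (M′ / 10^{s′}). That is, every number expressible as a power of ten times a finite decimal fraction in [0,1) is also expressible as a power of two times a finite decimal fraction in [0,1). -/

import Mathlib

theorem binarization_correct (e : ℤ) (M s : ℕ) (hM : M < 10 ^ s) :
    ∃ (e' : ℤ) (M' s' : ℕ), M' < 10 ^ s' ∧
      (10 : ℚ) ^ e * ((M : ℚ) / (10 : ℚ) ^ s) =
        (2 : ℚ) ^ e' * ((M' : ℚ) / (10 : ℚ) ^ s') := by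
  set a := e.toNat with ha
  set b := (-e).toNat with hb
  have he : e = (a : ℤ) - b := by rw [ha, hb]; omega
  by_cases hM0 : M = 0
  · exact ⟨0, 0, 0, by norm_num, by simp [hM0]⟩
  refine ⟨(4 * a : ℕ), 10 ^ a * M * 5 ^ (4 * a), s + b + 4 * a, ?_, ?_⟩
  · have h10 : (10:ℕ) ^ a ≤ 2 ^ (4 * a) := by
      calc (10:ℕ)^a ≤ 16^a := Nat.pow_le_pow_left (by norm_num) a
        _ = 2 ^ (4*a) := by rw [pow_mul]; norm_num
    calc 10 ^ a * M * 5 ^ (4 * a) < 10 ^ a * 10 ^ s * 5 ^ (4 * a) := by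
          gcongr
      _ ≤ 2 ^ (4 * a) * 10 ^ s * 5 ^ (4 * a) := by gcongr
      _ = 10 ^ (s + 4 * a) := by
          rw [mul_right_comm, ← mul_pow]
          norm_num
          rw [← pow_add, Nat.add_comm]
      _ ≤ 10 ^ (s + b + 4 * a) := Nat.pow_le_pow_right (by norm_num) (by omega)
  · rw [he, zpow_sub₀ (by norm_num : (10:ℚ) ≠ 0)]
    simp only [zpow_natCast]
    push_cast
    have key : (2:ℚ) ^ (a * 4) * 5 ^ (a * 4) = 10 ^ (a * 4) := by
      rw [← mul_pow]; norm_num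
    field_simp
    linear_combination (-(10:ℚ) ^ s * 10 ^ b) * key
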